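/- arXiv:1105.5500 — 3 statements merged into one kernel-verified Lean document; each statement's English description precedes it below -/
import Mathlib

section
/- Injectivity half of the Struktursatz: with C as above, if φ : P → Q is a nonzero morphism of projective objects and every simple submodule of the socle of Q is a homomorphic image of a projective-injective object, then there exists a projective-injective object X and a morphism ψ : X → P with φ∘ψ ≠ 0. -/
open CategoryTheory CategoryTheory.Limits

namespace Stmt13

variable {C : Type*} [Category C] [Abelian C]

/-- Injectivity half of the Struktursatz: in an abelian category with finite
length objects (so every nonzero object has a simple subobject), if φ : P → Q
is a nonzero morphism of projective objects and every simple subobject of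
(the socle of) Q is a homomorphic image of a projective-injective object, then
there is a projective-injective X and ψ : X ⟶ P with ψ ≫ φ ≠ 0. In particular
the restriction functor Hom(−, −)|_{proj-inj} is faithful on projectives. -/
theorem struktursatz_injectivity
    (hfl : ∀ M : C, ¬ IsZero M → ∃ (S : C) (i : S ⟶ M), Simple S ∧ Mono i)
    (P Q : C) (hP : Projective P) (hQ : Projective Q)
    (hsoc : ∀ (S : C) (i : S ⟶ Q), Simple S → Mono i →
      ∃ (X : C) (e : X ⟶ S), Projective X ∧ Injective X ∧ Epi e)
    (φ : P ⟶ Q) (hφ : φ ≠ 0) :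
    ∃ (X : C) (ψ : X ⟶ P), Projective X ∧ Injective X ∧ ψ ≫ φ ≠ 0 := by
  have himg : ¬ IsZero (Abelian.image φ) := by
    intro h
    apply hφ
    rw [← Abelian.image.fac φ, h.eq_zero_of_src (Abelian.image.ι φ), comp_zero]
  obtain ⟨S, i, hS, hi⟩ := hfl _ himg
  haveI := hS; haveI := hi
  have hmono : Mono (i ≫ Abelian.image.ι φ) := mono_comp _ _
  obtain ⟨X, e, hXp, hXi, he⟩ := hsoc S (i ≫ Abelian.image.ι φ) hS hmono
  haveI := he
  refine ⟨X, hXp.factorThru (e ≫ i) (Abelian.factorThruImage φ), hXp, hXi, ?_⟩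
  have hfac : hXp.factorThru (e ≫ i) (Abelian.factorThruImage φ) ≫
      Abelian.factorThruImage φ = e ≫ i := Projective.factorThru_comp _ _
  intro hzero
  have : i ≫ Abelian.image.ι φ = 0 := by
    rw [← cancel_epi e, comp_zero, ← Category.assoc, ← hfac, Category.assoc,
      Abelian.image.fac, hzero]
  exact Simple.not_isZero S (IsZero.of_mono_eq_zero _ this)

end Stmt13
end

section
/- Trace of projective-injectives under tensoring: let C be an abelian category and T : C → C an exact functor admitting an exact left and right adjoint, such that T preserves projective-injective objects. Then for every object N, T(Tr_{PI}(N)) ≅ Tr_{PI}(T(N)), where Tr_{PI}(N) denotes the sum of images of all morphisms from projective-injective objects to N. -/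
open CategoryTheory CategoryTheory.Limits

namespace Stmt14

variable {C : Type*} [Category C] [Abelian C]

/-- `IsPITrace N t` says that the subobject t of N is the trace Tr_{PI}(N) of
the projective-injective objects in N: it contains the image of every morphism
from a projective-injective object into N, and it is the least such subobject. -/
def IsPITrace (N : C) (t : Subobject N) : Prop :=
  (∀ M : C, Projective M → Injective M → ∀ f : M ⟶ N, imageSubobject f ≤ t) ∧
  (∀ t' : Subobject N,
    (∀ M : C, Projective M → Injective M → ∀ f : M ⟶ N, imageSubobject f ≤ t') →
    t ≤ t')

/-- Trace of projective-injectives under an exact functor T with exact left and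
right adjoint G which preserves projective-injective objects:
T(Tr_{PI}(N)) ≅ Tr_{PI}(T(N)) for every object N. -/
theorem trace_commutes_with_biadjoint_functor
    (T G : C ⥤ C) (adj₁ : G ⊣ T) (adj₂ : T ⊣ G)
    (hTPI : ∀ M : C, Projective M → Injective M →
      Projective (T.obj M) ∧ Injective (T.obj M))
    (N : C) (t : Subobject N) (t' : Subobject (T.obj N))
    (ht : IsPITrace N t) (ht' : IsPITrace (T.obj N) t') :
    Nonempty (T.obj (t : C) ≅ (t' : C)) := by
  haveI hTm : T.PreservesMonomorphisms :=
    Functor.preservesMonomorphisms_of_adjunction adj₁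
  haveI hTe : T.PreservesEpimorphisms :=
    Functor.preservesEpimorphisms_of_adjunction adj₂
  haveI hGm : G.PreservesMonomorphisms :=
    Functor.preservesMonomorphisms_of_adjunction adj₂
  haveI hGe : G.PreservesEpimorphisms :=
    Functor.preservesEpimorphisms_of_adjunction adj₁
  haveI : T.IsLeftAdjoint := adj₂.isLeftAdjoint
  haveI : Mono (T.map t.arrow) := T.map_mono t.arrow
  -- the quotient of T N by t'
  set q : T.obj N ⟶ cokernel t'.arrow := cokernel.π t'.arrow with hq
  -- Step 1 : t' ≤ mk (T.map t.arrow)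
  have h1 : t' ≤ Subobject.mk (T.map t.arrow) := by
    apply ht'.2
    intro M pM iM f
    -- transpose f along adj₁
    set g : G.obj M ⟶ N := (adj₁.homEquiv M N).symm f with hg
    have hgim : imageSubobject g ≤ t :=
      ht.1 (G.obj M) (adj₁.map_projective M pM) (adj₂.map_injective M iM) g
    set k : G.obj M ⟶ (t : C) :=
      factorThruImageSubobject g ≫ Subobject.ofLE _ _ hgim with hk
    have hkg : k ≫ t.arrow = g := by
      simp [hk]
    have hf : f = adj₁.unit.app M ≫ T.map g := by
      have := (adj₁.homEquiv M N).apply_symm_apply f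
      rw [← this, ← hg, Adjunction.homEquiv_unit]
    refine imageSubobject_le_mk (T.map t.arrow) f
      (adj₁.unit.app M ≫ T.map k) ?_
    rw [hf, Category.assoc, ← T.map_comp, hkg]
  -- Step 2 : mk (T.map t.arrow) ≤ t'
  -- consider the subobject ker (N ⟶ G T N ⟶ G (T N / t')) of N
  haveI : G.IsLeftAdjoint := adj₁.isLeftAdjoint
  have h2 : Subobject.mk (T.map t.arrow) ≤ t' := by
    set kq : N ⟶ G.obj (cokernel t'.arrow) := adj₂.unit.app N ≫ G.map q with hkq
    have hts : t ≤ kernelSubobject kq := by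
      apply ht.2
      intro M pM iM f
      have hTf : imageSubobject (T.map f) ≤ t' :=
        ht'.1 (T.obj M) (hTPI M pM iM).1 (hTPI M pM iM).2 (T.map f)
      set k : T.obj M ⟶ (t' : C) :=
        factorThruImageSubobject (T.map f) ≫ Subobject.ofLE _ _ hTf with hk
      have hkf : k ≫ t'.arrow = T.map f := by simp [hk]
      have hzero : f ≫ kq = 0 := by
        rw [hkq, ← Category.assoc, ← adj₂.unit_naturality f, Category.assoc,
          ← G.map_comp, hq, ← hkf, Category.assoc, cokernel.condition,
          comp_zero, G.map_zero, comp_zero]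
      exact imageSubobject_le f (factorThruKernelSubobject _ f hzero) (by simp)
    -- hence t.arrow kills the composite, so T.map t.arrow ≫ q = 0
    have harr : t.arrow ≫ kq = 0 := by
      rw [← Subobject.ofLE_arrow hts, Category.assoc,
        kernelSubobject_arrow_comp kq, comp_zero]
    have hTq : T.map t.arrow ≫ q = 0 := by
      have h0 := congrArg
        (fun g : (t : C) ⟶ G.obj (cokernel t'.arrow) =>
          T.map g ≫ adj₂.counit.app (cokernel t'.arrow)) harr
      simp only [hkq, T.map_comp, T.map_zero, zero_comp, Category.assoc,
        adj₂.counit_naturality, adj₂.left_triangle_components_assoc] at h0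
      rw [show T.map (G.map q) ≫ adj₂.counit.app (cokernel t'.arrow) =
          adj₂.counit.app _ ≫ q from adj₂.counit.naturality q,
        adj₂.left_triangle_components_assoc] at h0
      exact h0
    exact Subobject.mk_le_of_comm (Abelian.monoLift t'.arrow (T.map t.arrow) hTq)
      (by simp)
  have heq : Subobject.mk (T.map t.arrow) = t' := le_antisymm h2 h1
  exact ⟨(Subobject.underlyingIso (T.map t.arrow)).symm ≪≫
    (Subobject.isoOfEq _ _ heq)⟩

end Stmt14
end

section
/- Equivalence from adjoint pair with both compositions identity on simples: let F : C → D and G : D → C be exact functors between abelian categories with all objects of finite length, with G left and right adjoint to F. If F∘G is isomorphic to the identity on D, and G∘F applied to every simple object of C is isomorphic to that simple object (naturally), then F and G are mutually inverse equivalences of categories. -/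
open CategoryTheory CategoryTheory.Limits

namespace Stmt18

variable {C D : Type*} [Category C] [Category D] [Abelian C] [Abelian D]

/-- Finite length: M has a finite filtration with simple subquotients. -/
inductive FinLen {A : Type*} [Category A] [Abelian A] : A → Prop
  | of_isZero (M : A) (h : IsZero M) : FinLen M
  | step (S M N : A) (i : S ⟶ M) (p : M ⟶ N) (w : i ≫ p = 0) (hS : Simple S)
      (hse : (ShortComplex.mk i p w).ShortExact) (hN : FinLen N) : FinLen M

/-- Equivalence from an adjoint pair with both compositions the identity on
simples: if F, G are exact (here: mutually adjoint on both sides, hence exact)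
functors between abelian categories with all objects of finite length, F∘G is
isomorphic to the identity of D, and the unit of F ⊣ G is an isomorphism on
every simple object of C, then F and G are mutually inverse equivalences. -/
theorem equivalence_of_biadjoint_identity_on_simples
    (F : C ⥤ D) (G : D ⥤ C) (adj₁ : G ⊣ F) (adj₂ : F ⊣ G)
    (hflC : ∀ M : C, FinLen M) (hflD : ∀ N : D, FinLen N)
    (hFG : G ⋙ F ≅ 𝟭 D)
    (hsimple : ∀ S : C, Simple S → IsIso (adj₂.unit.app S)) :
    F.IsEquivalence ∧ G.IsEquivalence ∧ Nonempty (F ⋙ G ≅ 𝟭 C) := by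
  have hF1 : PreservesLimits F := adj₁.rightAdjoint_preservesLimits
  have hF2 : PreservesColimits F := adj₂.leftAdjoint_preservesColimits
  have hG1 : PreservesLimits G := adj₂.rightAdjoint_preservesLimits
  have hG2 : PreservesColimits G := adj₁.leftAdjoint_preservesColimits
  have hFz : F.PreservesZeroMorphisms := inferInstance
  have hGz : G.PreservesZeroMorphisms := inferInstance
  have hfl : PreservesFiniteLimits (F ⋙ G) :=
    comp_preservesFiniteLimits F G
  have hfc : PreservesFiniteColimits (F ⋙ G) :=
    comp_preservesFiniteColimits F G
  have key : ∀ M : C, IsIso (adj₂.unit.app M) := by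
    intro M
    induction hflC M with
    | of_isZero M h =>
      have hz : IsZero ((F ⋙ G).obj M) := (F ⋙ G).map_isZero h
      exact ⟨0, h.eq_of_src _ _, hz.eq_of_src _ _⟩
    | step S M N i p w hS hse hN ih =>
      have h1 : IsIso (adj₂.unit.app S) := hsimple S hS
      have hse2 : ((ShortComplex.mk i p w).map (F ⋙ G)).ShortExact :=
        hse.map_of_exact (F ⋙ G)
      let φ : ShortComplex.mk i p w ⟶ (ShortComplex.mk i p w).map (F ⋙ G) :=
        { τ₁ := adj₂.unit.app S
          τ₂ := adj₂.unit.app M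
          τ₃ := adj₂.unit.app N
          comm₁₂ := by exact (adj₂.unit.naturality i).symm
          comm₂₃ := by exact (adj₂.unit.naturality p).symm }
      exact ShortComplex.isIso₂_of_shortExact_of_isIso₁₃' φ hse hse2 h1 ih
  have : IsIso adj₂.unit := NatIso.isIso_of_isIso_app _
  let e : C ≌ D := CategoryTheory.Equivalence.mk F G (asIso adj₂.unit) hFG
  exact ⟨e.isEquivalence_functor, e.isEquivalence_inverse, ⟨(asIso adj₂.unit).symm⟩⟩

end Stmt18
end
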